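/- Every Pascal tensor (of any order m ≥ 2) is strongly completely positive. -/

import Mathlib

section PascalAux

open Set Finset

namespace PascalSCP

variable {d : ℕ}

private abbrev E (d : ℕ) := Fin d → ℝ

/-- padding sum lemma -/
lemma dite_sum {M : Type*} [AddCommMonoid M] {k D : ℕ} (hk : k ≤ D) (H : Fin k → M) :
    ∑ i : Fin D, (if h : (i : ℕ) < k then H ⟨i, h⟩ else 0) = ∑ j : Fin k, H j := by
  set F : ℕ → M := fun i => if h : i < k then H ⟨i, h⟩ else 0 with hF
  have h1 : ∑ i : Fin D, F (i : ℕ) = ∑ i ∈ Finset.range D, F i :=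
    Fin.sum_univ_eq_sum_range F D
  have h2 : ∑ j : Fin k, F (j : ℕ) = ∑ i ∈ Finset.range k, F i :=
    Fin.sum_univ_eq_sum_range F k
  have h3 : ∑ i ∈ Finset.range k, F i = ∑ i ∈ Finset.range D, F i := by
    apply Finset.sum_subset
    · exact Finset.range_subset_range.2 hk
    · intro x _ hx
      simp only [Finset.mem_range, not_lt] at hx
      simp [hF, Nat.not_lt.2 hx]
  have h4 : ∀ j : Fin k, F (j : ℕ) = H j := by
    intro j
    simp [hF, j.isLt]
  calc ∑ i : Fin D, F (i : ℕ)
      = ∑ i ∈ Finset.range D, F i := h1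
    _ = ∑ i ∈ Finset.range k, F i := h3.symm
    _ = ∑ j : Fin k, F (j : ℕ) := h2.symm
    _ = ∑ j : Fin k, H j := Finset.sum_congr rfl fun j _ => h4 j

/-- The convex hull of a nonempty set in `Fin d → ℝ` equals the image of the compact
parameter space. -/
lemma hull_eq_image {B : Set (E d)} (hne : B.Nonempty) :
    convexHull ℝ B = (fun p : (Fin (d + 1) → ℝ) × (Fin (d + 1) → E d) =>
      ∑ i, p.1 i • p.2 i) '' ((stdSimplex ℝ (Fin (d + 1))) ×ˢ (Set.univ.pi fun _ => B)) := by
  obtain ⟨b₀, hb₀⟩ := hne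
  apply Set.Subset.antisymm
  · intro x hx
    rw [convexHull_eq_union] at hx
    simp only [Set.mem_iUnion] at hx
    obtain ⟨t, ht, hai, hxt⟩ := hx
    have hcard : t.card ≤ d + 1 := by
      have h1 : Fintype.card t ≤
          Module.finrank ℝ ↥(vectorSpan ℝ (Set.range (Subtype.val : t → E d))) + 1 :=
        hai.card_le_finrank_succ
      have h2 : Module.finrank ℝ ↥(vectorSpan ℝ (Set.range (Subtype.val : t → E d))) ≤
          Module.finrank ℝ (E d) := Submodule.finrank_le _
      have h3 : Module.finrank ℝ (E d) = d := by
        simp [Module.finrank_pi]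
      have h4 : Fintype.card t = t.card := Fintype.card_coe t
      omega
    rw [Finset.convexHull_eq] at hxt
    obtain ⟨w, hw0, hw1, hwx⟩ := hxt
    rw [Finset.centerMass_eq_of_sum_1 _ _ hw1] at hwx
    simp only [id_eq] at hwx
    set k := t.card with hk
    set e := t.equivFin with he
    refine ⟨(fun i => if h : (i : ℕ) < k then w (e.symm ⟨i, h⟩) else 0,
             fun i => if h : (i : ℕ) < k then ((e.symm ⟨i, h⟩ : t) : E d) else b₀), ⟨?_, ?_⟩, ?_⟩
    · constructor
      · intro i
        by_cases h : (i : ℕ) < k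
        · simp only [dif_pos h]
          exact hw0 _ (e.symm ⟨i, h⟩).2
        · simp [h]
      · rw [dite_sum (M := ℝ) (k := k) (D := d + 1) (by omega) (fun j => w (e.symm j))]
        have h5 : ∑ j : Fin k, w ((e.symm j : t) : E d) = ∑ a : t, w (a : E d) :=
          Equiv.sum_comp e.symm (fun a : t => w (a : E d))
        rw [h5, Finset.univ_eq_attach, Finset.sum_attach t w, hw1]
    · intro i _
      by_cases h : (i : ℕ) < k
      · simp only [dif_pos h]
        exact ht (e.symm ⟨i, h⟩).2
      · simp only [dif_neg h]
        exact hb₀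
    · simp only
      have heq : ∀ i : Fin (d + 1),
          (if h : (i : ℕ) < k then w (e.symm ⟨i, h⟩) else 0) •
            (if h : (i : ℕ) < k then ((e.symm ⟨i, h⟩ : t) : E d) else b₀)
          = (if h : (i : ℕ) < k then w (e.symm ⟨i, h⟩) • ((e.symm ⟨i, h⟩ : t) : E d) else 0) := by
        intro i
        by_cases h : (i : ℕ) < k <;> simp [h]
      rw [Finset.sum_congr rfl fun i _ => heq i]
      rw [dite_sum (by omega) (fun j => w (e.symm j) • ((e.symm j : t) : E d))]
      have h5 : ∑ j : Fin k, w ((e.symm j : t) : E d) • ((e.symm j : t) : E d)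
          = ∑ a : t, w (a : E d) • (a : E d) :=
        Equiv.sum_comp e.symm (fun a : t => w (a : E d) • (a : E d))
      rw [h5, Finset.univ_eq_attach, Finset.sum_attach t (fun y => w y • y), hwx]
  · rintro x ⟨⟨ww, zz⟩, ⟨hw, hz⟩, rfl⟩
    simp only
    have : (Finset.univ : Finset (Fin (d + 1))).centerMass ww zz ∈ convexHull ℝ B := by
      apply Finset.centerMass_mem_convexHull
      · intro i _; exact hw.1 i
      · rw [hw.2]; norm_num
      · intro i _; exact hz i (Set.mem_univ i)
    rwa [Finset.centerMass_eq_of_sum_1 _ _ hw.2] at this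

lemma isCompact_hull {B : Set (E d)} (hne : B.Nonempty) (hB : IsCompact B) :
    IsCompact (convexHull ℝ B) := by
  rw [hull_eq_image hne]
  apply IsCompact.image
  · exact ((isCompact_stdSimplex _ _).prod (isCompact_univ_pi fun _ => hB))
  · apply continuous_finset_sum
    intro i _
    exact ((continuous_apply i).comp continuous_fst).smul
      ((continuous_apply i).comp continuous_snd)


open MeasureTheory Filter

variable {N : ℕ}

/-- The normalizing polynomial. -/
noncomputable def q (N : ℕ) (u : ℝ) : ℝ := ∑ r ∈ Finset.range (N + 1), u ^ r * (1 - u) ^ (N - r)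

/-- The normalized curve. -/
noncomputable def g (N : ℕ) (u : ℝ) : E (N + 1) :=
  (q N u)⁻¹ • fun s : Fin (N + 1) => u ^ (s : ℕ) * (1 - u) ^ (N - (s : ℕ))

lemma g_apply (u : ℝ) (s : Fin (N + 1)) :
    g N u s = (q N u)⁻¹ * (u ^ (s : ℕ) * (1 - u) ^ (N - (s : ℕ))) := rfl

lemma q_pos {u : ℝ} (hu : u ∈ Icc (0:ℝ) 1) : 0 < q N u := by
  obtain ⟨h0, h1⟩ := hu
  have hterm : ∀ r ∈ Finset.range (N + 1), 0 ≤ u ^ r * (1 - u) ^ (N - r) := by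
    intro r _
    have : (0:ℝ) ≤ 1 - u := by linarith
    positivity
  rcases lt_or_eq_of_le h1 with h | h
  · refine Finset.sum_pos' hterm ⟨0, Finset.mem_range.2 (by omega), ?_⟩
    have : (0:ℝ) < 1 - u := by linarith
    positivity
  · refine Finset.sum_pos' hterm ⟨N, Finset.mem_range.2 (by omega), ?_⟩
    simp [h]

/-- coordinate sum as a linear map -/
noncomputable def σ (N : ℕ) : E (N + 1) →ₗ[ℝ] ℝ where
  toFun := fun x => ∑ s, x s
  map_add' := by intro x y; simp [Finset.sum_add_distrib]
  map_smul' := by intro c x; simp [Finset.mul_sum]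

lemma σ_g {u : ℝ} (hu : u ∈ Icc (0:ℝ) 1) : σ N (g N u) = 1 := by
  have hsum : ∑ s : Fin (N + 1), u ^ (s : ℕ) * (1 - u) ^ (N - (s : ℕ)) = q N u :=
    Fin.sum_univ_eq_sum_range (fun i => u ^ i * (1 - u) ^ (N - i)) (N + 1)
  have : σ N (g N u) = (q N u)⁻¹ * q N u := by
    simp only [σ, LinearMap.coe_mk, AddHom.coe_mk, g_apply, ← Finset.mul_sum]
    rw [hsum]
  rw [this, inv_mul_cancel₀ (q_pos hu).ne']

lemma g_cont : ContinuousOn (g N) (Icc (0:ℝ) 1) := by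
  show ContinuousOn ((fun u : ℝ => (q N u)⁻¹) • (fun (u : ℝ) (s : Fin (N + 1)) => u ^ (s : ℕ) * (1 - u) ^ (N - (s : ℕ)))) (Icc (0:ℝ) 1)
  apply ContinuousOn.smul
  · apply ContinuousOn.inv₀
    · apply Continuous.continuousOn
      apply continuous_finset_sum
      intro r _
      exact (continuous_pow r).mul ((continuous_const.sub continuous_id).pow _)
    · intro u hu
      exact (q_pos hu).ne'
  · apply Continuous.continuousOn
    apply continuous_pi
    intro s
    exact (continuous_pow _).mul ((continuous_const.sub continuous_id).pow _)

/-- The main cone. -/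
noncomputable def CC (N : ℕ) : Set (E (N + 1)) :=
  {x | ∃ r : ℝ, 0 ≤ r ∧ ∃ y ∈ convexHull ℝ (g N '' Icc (0:ℝ) 1), x = r • y}

lemma B_nonempty : (g N '' Icc (0:ℝ) 1).Nonempty :=
  ⟨g N 0, Set.mem_image_of_mem _ (by constructor <;> norm_num)⟩

lemma K_compact : IsCompact (convexHull ℝ (g N '' Icc (0:ℝ) 1)) := by
  have : N + 1 = (N + 1) := rfl
  exact isCompact_hull B_nonempty (isCompact_Icc.image_of_continuousOn g_cont)

lemma σ_K {y : E (N + 1)} (hy : y ∈ convexHull ℝ (g N '' Icc (0:ℝ) 1)) : σ N y = 1 := by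
  have hsub : convexHull ℝ (g N '' Icc (0:ℝ) 1) ⊆ {y | σ N y = 1} := by
    apply convexHull_min
    · rintro _ ⟨u, hu, rfl⟩
      exact σ_g hu
    · exact convex_hyperplane (σ N).isLinear 1
  exact hsub hy

lemma CC_smul {x : E (N + 1)} (hx : x ∈ CC N) {c : ℝ} (hc : 0 ≤ c) : c • x ∈ CC N := by
  obtain ⟨r, hr, y, hy, rfl⟩ := hx
  exact ⟨c * r, mul_nonneg hc hr, y, hy, smul_smul c r y⟩

lemma CC_zero : (0 : E (N + 1)) ∈ CC N :=
  ⟨0, le_rfl, _, subset_convexHull ℝ _ B_nonempty.some_mem, (zero_smul ℝ _).symm⟩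

lemma CC_convex : Convex ℝ (CC N) := by
  rintro x1 ⟨r1, hr1, y1, hy1, rfl⟩ x2 ⟨r2, hr2, y2, hy2, rfl⟩ a b ha hb hab
  by_cases hρ : a * r1 + b * r2 = 0
  · have h1 : a * r1 = 0 := by nlinarith [mul_nonneg ha hr1, mul_nonneg hb hr2]
    have h2 : b * r2 = 0 := by nlinarith [mul_nonneg ha hr1, mul_nonneg hb hr2]
    have : a • r1 • y1 + b • r2 • y2 = 0 := by
      rw [smul_smul, smul_smul, h1, h2, zero_smul, zero_smul, add_zero]
    rw [this]; exact CC_zero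
  · set ρ := a * r1 + b * r2 with hρdef
    have hρpos : 0 < ρ := lt_of_le_of_ne (by positivity) (Ne.symm hρ)
    refine ⟨ρ, hρpos.le, (a * r1 / ρ) • y1 + (b * r2 / ρ) • y2, ?_, ?_⟩
    · apply convex_convexHull ℝ _ hy1 hy2 (by positivity) (by positivity)
      field_simp
      exact hρdef.symm
    · have e1 : ρ * (a * r1 / ρ) = a * r1 := by field_simp
      have e2 : ρ * (b * r2 / ρ) = b * r2 := by field_simp
      rw [smul_add, smul_smul, smul_smul, smul_smul, smul_smul, e1, e2]

lemma CC_closed : IsClosed (CC N) := by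
  have hKcl : IsClosed (convexHull ℝ (g N '' Icc (0:ℝ) 1)) := K_compact.isClosed
  obtain ⟨M, hM⟩ := K_compact.isBounded.subset_closedBall 0
  have hσcont : Continuous (σ N) := LinearMap.continuous_on_pi _
  apply IsSeqClosed.isClosed
  intro xs x hxs hx
  have hrep : ∀ n, ∃ r : ℝ, 0 ≤ r ∧ ∃ y ∈ convexHull ℝ (g N '' Icc (0:ℝ) 1), xs n = r • y := hxs
  choose rn hrn yn hyn hxeq using hrep
  have hσn : ∀ n, σ N (xs n) = rn n := by
    intro n
    rw [hxeq n, LinearMap.map_smul, smul_eq_mul, σ_K (hyn n), mul_one]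
  have htr : Tendsto rn atTop (nhds (σ N x)) := by
    have : Tendsto (fun n => σ N (xs n)) atTop (nhds (σ N x)) :=
      (hσcont.tendsto x).comp hx
    simpa [hσn] using this
  have hr0 : 0 ≤ σ N x := ge_of_tendsto htr (Eventually.of_forall hrn)
  rcases eq_or_lt_of_le hr0 with h | h
  · -- limit has σ = 0 : x = 0
    have hMn : ∀ n, ‖xs n‖ ≤ rn n * M := by
      intro n
      rw [hxeq n, norm_smul, Real.norm_eq_abs, abs_of_nonneg (hrn n)]
      apply mul_le_mul_of_nonneg_left _ (hrn n)
      have := hM (hyn n)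
      rwa [Metric.mem_closedBall, dist_zero_right] at this
    have h0 : Tendsto (fun n => ‖xs n‖) atTop (nhds 0) := by
      apply squeeze_zero (fun n => norm_nonneg _) hMn
      have := htr.mul_const M
      rwa [← h, zero_mul] at this
    have h1 : Tendsto (fun n => ‖xs n‖) atTop (nhds ‖x‖) := hx.norm
    have : x = 0 := by
      rw [← norm_eq_zero]
      exact tendsto_nhds_unique h1 h0
    rw [this]; exact CC_zero
  · -- σ x > 0
    have hev : ∀ᶠ n in atTop, 0 < rn n := htr.eventually (eventually_gt_nhds h)
    have h6 : Tendsto (fun n => (rn n)⁻¹ • xs n) atTop (nhds ((σ N x)⁻¹ • x)) :=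
      Tendsto.smul (htr.inv₀ h.ne') hx
    have h7 : ∀ᶠ n in atTop, (rn n)⁻¹ • xs n ∈ convexHull ℝ (g N '' Icc (0:ℝ) 1) := by
      filter_upwards [hev] with n hn
      rw [hxeq n, smul_smul, inv_mul_cancel₀ hn.ne', one_smul]
      exact hyn n
    have hyK : (σ N x)⁻¹ • x ∈ convexHull ℝ (g N '' Icc (0:ℝ) 1) :=
      hKcl.mem_of_tendsto h6 h7
    exact ⟨σ N x, hr0, _, hyK, by rw [smul_smul, mul_inv_cancel₀ h.ne', one_smul]⟩

lemma curve_mem {t : ℝ} (ht : 0 ≤ t) : (fun s : Fin (N + 1) => t ^ (s : ℕ)) ∈ CC N := by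
  have h1t : (0:ℝ) < 1 + t := by linarith
  set u := t / (1 + t) with hu_def
  have hu : u ∈ Icc (0:ℝ) 1 := ⟨div_nonneg ht h1t.le, (div_le_one h1t).2 (by linarith)⟩
  have h1u : 1 - u = 1 / (1 + t) := by
    rw [hu_def]
    field_simp
    ring
  set ρ := ∑ r ∈ Finset.range (N + 1), t ^ r with hρ_def
  have hρpos : 0 < ρ := by
    refine Finset.sum_pos' (fun r _ => pow_nonneg ht r) ⟨0, Finset.mem_range.2 (by omega), ?_⟩
    norm_num
  have hterm : ∀ r, r ≤ N → u ^ r * (1 - u) ^ (N - r) = t ^ r / (1 + t) ^ N := by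
    intro r hr
    rw [h1u, hu_def, div_pow, div_pow, one_pow, div_mul_div_comm, mul_one, ← pow_add,
      Nat.add_sub_cancel' hr]
  have hqu : q N u = ρ / (1 + t) ^ N := by
    rw [q, hρ_def, Finset.sum_div]
    apply Finset.sum_congr rfl
    intro r hr
    exact hterm r (by have := Finset.mem_range.1 hr; omega)
  have hg : ∀ s : Fin (N + 1), g N u s = t ^ (s : ℕ) / ρ := by
    intro s
    rw [g_apply, hterm (s : ℕ) (by omega), hqu]
    have hne1 : ((1:ℝ) + t) ^ N ≠ 0 := by positivity
    field_simp
  refine ⟨ρ, hρpos.le, g N u, subset_convexHull ℝ _ (Set.mem_image_of_mem _ hu), ?_⟩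
  funext s
  rw [Pi.smul_apply, hg s, smul_eq_mul, mul_div_cancel₀ _ hρpos.ne']

/-- the factorial vector is in the cone -/
lemma factorial_mem : (fun s : Fin (N + 1) => ((s : ℕ).factorial : ℝ)) ∈ CC N := by
  set f : E (N + 1) := fun s => ((s : ℕ).factorial : ℝ) with hf_def
  by_contra hf
  obtain ⟨φ, β, hβ1, hβ2⟩ := geometric_hahn_banach_closed_point CC_convex CC_closed hf
  have hβpos : 0 < β := by
    have := hβ1 0 CC_zero
    simpa using this
  have hnp : ∀ a ∈ CC N, φ a ≤ 0 := by
    intro a ha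
    by_contra hpos
    push_neg at hpos
    have hmem := CC_smul ha (c := (β + 1) / φ a) (div_nonneg (by linarith) hpos.le)
    have := hβ1 _ hmem
    rw [φ.map_smul, smul_eq_mul, div_mul_cancel₀ _ hpos.ne'] at this
    linarith
  set φs : Fin (N + 1) → ℝ := fun s => φ (Pi.single s 1) with hφs_def
  have hexp : ∀ v : E (N + 1), φ v = ∑ s, v s * φs s := by
    intro v
    conv_lhs => rw [← Finset.univ_sum_single v]
    rw [map_sum]
    apply Finset.sum_congr rfl
    intro s _
    have : (Pi.single s (v s) : E (N + 1)) = v s • (Pi.single s (1:ℝ) : E (N + 1)) := by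
      rw [← Pi.single_smul, smul_eq_mul, mul_one]
    rw [this, φ.map_smul, smul_eq_mul]
  have hcu : ∀ t : ℝ, 0 < t → ∑ s : Fin (N + 1), t ^ (s : ℕ) * φs s ≤ 0 := by
    intro t ht
    rw [← hexp]
    exact hnp _ (curve_mem ht.le)
  have hint : ∀ k : ℕ, IntegrableOn (fun x : ℝ => Real.exp (-x) * x ^ k) (Ioi 0) := by
    intro k
    have h := Real.GammaIntegral_convergent (s := (k : ℝ) + 1) (by positivity)
    apply h.congr_fun _ measurableSet_Ioi
    intro x hx
    simp only [add_sub_cancel_right, Real.rpow_natCast]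
  have hval : ∀ k : ℕ, ∫ x in Ioi (0:ℝ), Real.exp (-x) * x ^ k = (k.factorial : ℝ) := by
    intro k
    have h1 := Real.Gamma_eq_integral (s := (k : ℝ) + 1) (by positivity)
    rw [Real.Gamma_nat_eq_factorial] at h1
    rw [h1]
    apply setIntegral_congr_fun measurableSet_Ioi
    intro x hx
    simp only [add_sub_cancel_right, Real.rpow_natCast]
  have h8 : ∫ x in Ioi (0:ℝ), (∑ s : Fin (N + 1), φs s * (Real.exp (-x) * x ^ (s : ℕ)))
      = ∑ s : Fin (N + 1), φs s * ((s : ℕ).factorial : ℝ) := by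
    have hi : ∀ s : Fin (N + 1), Integrable (fun x : ℝ => φs s * (Real.exp (-x) * x ^ (s : ℕ)))
        (volume.restrict (Set.Ioi 0)) := fun s => ((hint (s : ℕ)).const_mul (φs s))
    rw [integral_finset_sum Finset.univ (fun s _ => hi s)]
    apply Finset.sum_congr rfl
    intro s _
    rw [MeasureTheory.integral_const_mul, hval]
  have h9 : ∫ x in Ioi (0:ℝ), (∑ s : Fin (N + 1), φs s * (Real.exp (-x) * x ^ (s : ℕ))) ≤ 0 := by
    have hpt : ∀ x ∈ Ioi (0:ℝ),
        0 ≤ -(∑ s : Fin (N + 1), φs s * (Real.exp (-x) * x ^ (s : ℕ))) := by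
      intro x hx
      have hre : ∑ s : Fin (N + 1), φs s * (Real.exp (-x) * x ^ (s : ℕ))
          = Real.exp (-x) * ∑ s : Fin (N + 1), x ^ (s : ℕ) * φs s := by
        rw [Finset.mul_sum]
        apply Finset.sum_congr rfl
        intro s _
        ring
      rw [hre, neg_nonneg]
      exact mul_nonpos_of_nonneg_of_nonpos (Real.exp_nonneg _) (hcu x hx)
    have := setIntegral_nonneg (μ := volume) measurableSet_Ioi hpt
    rw [integral_neg] at this
    linarith
  have hfφ : φ f = ∑ s : Fin (N + 1), φs s * ((s : ℕ).factorial : ℝ) := by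
    rw [hexp f]
    apply Finset.sum_congr rfl
    intro s _
    rw [hf_def]
    ring
  rw [h8] at h9
  rw [← hfφ] at h9
  linarith

/-- The key moment representation: factorials as a positive combination. -/
lemma moment_rep (N : ℕ) : ∃ (k : ℕ) (w : Fin k → ℝ) (t : Fin k → ℝ),
    (∀ i, 0 ≤ w i) ∧ (∀ i, t i ∈ Icc (0:ℝ) 1) ∧
    ∀ s : ℕ, s ≤ N → (s.factorial : ℝ) = ∑ i, w i * ((t i) ^ s * (1 - t i) ^ (N - s)) := by
  obtain ⟨r, hr, y, hy, hfy⟩ := factorial_mem (N := N)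
  rw [_root_.convexHull_eq] at hy
  obtain ⟨ι, tt, ww, zz, hw0, hw1, hzB, hcm⟩ := hy
  rw [Finset.centerMass_eq_of_sum_1 _ _ hw1] at hcm
  have hzB' : ∀ a : {x // x ∈ tt}, ∃ uu, uu ∈ Icc (0:ℝ) 1 ∧ g N uu = zz a := by
    intro a
    rcases hzB a a.2 with ⟨uu, h1, h2⟩
    exact ⟨uu, h1, h2⟩
  choose U hU1 hU2 using hzB'
  set e := tt.equivFin with he
  refine ⟨tt.card, fun j => r * ww (e.symm j) * (q N (U (e.symm j)))⁻¹,
    fun j => U (e.symm j), ?_, fun j => hU1 _, ?_⟩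
  · intro j
    have := q_pos (N := N) (hU1 (e.symm j))
    have h2 := hw0 _ (e.symm j).2
    positivity
  · intro s hs
    set S : Fin (N + 1) := ⟨s, by omega⟩ with hS
    have h10 : ((s).factorial : ℝ) = r * y S := by
      have := congrFun hfy S
      rw [Pi.smul_apply, smul_eq_mul] at this
      exact this
    have h11 : y S = ∑ i ∈ tt, ww i * zz i S := by
      rw [← hcm, Finset.sum_apply]
      apply Finset.sum_congr rfl
      intro i _
      rw [Pi.smul_apply, smul_eq_mul]
    have h12 : ∀ j : Fin tt.card,
        (r * ww (e.symm j) * (q N (U (e.symm j)))⁻¹) *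
          ((U (e.symm j)) ^ s * (1 - U (e.symm j)) ^ (N - s))
        = r * (ww (e.symm j) * zz (e.symm j) S) := by
      intro j
      rw [← hU2 (e.symm j), g_apply]
      have : ((S : ℕ)) = s := rfl
      rw [this]
      ring
    rw [Finset.sum_congr rfl (fun j _ => h12 j)]
    have h13 : ∑ j : Fin tt.card, r * (ww (e.symm j) * zz (e.symm j) S)
        = ∑ a : {x // x ∈ tt}, r * (ww a * zz a S) :=
      Equiv.sum_comp e.symm (fun a => r * (ww a * zz a S))
    rw [h13, Finset.univ_eq_attach, Finset.sum_attach tt (fun i => r * (ww i * zz i S)),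
      ← Finset.mul_sum, ← h11, ← h10]

end PascalSCP

open Finset in
private lemma PascalSCP.shuffle {ι κ : Type*} [Fintype ι] (T : Finset κ)
    (x : ι → ℝ) (A : ι → κ → ℝ) (c : κ → ℝ) :
    ∑ a : ι, ∑ b : ι, x a * x b * (∑ j ∈ T, A a j * A b j * c j)
      = ∑ j ∈ T, (∑ a : ι, x a * A a j) * (∑ b : ι, x b * A b j) * c j := by
  have h1 : ∀ a b : ι, x a * x b * (∑ j ∈ T, A a j * A b j * c j)
      = ∑ j ∈ T, (x a * A a j) * ((x b * A b j) * c j) := by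
    intro a b
    rw [Finset.mul_sum]
    apply Finset.sum_congr rfl
    intro j _
    ring
  calc ∑ a : ι, ∑ b : ι, x a * x b * (∑ j ∈ T, A a j * A b j * c j)
      = ∑ a : ι, ∑ b : ι, ∑ j ∈ T, (x a * A a j) * ((x b * A b j) * c j) := by
        apply Finset.sum_congr rfl; intro a _; apply Finset.sum_congr rfl; intro b _; exact h1 a b
    _ = ∑ a : ι, ∑ j ∈ T, ∑ b : ι, (x a * A a j) * ((x b * A b j) * c j) := by
        apply Finset.sum_congr rfl; intro a _; exact Finset.sum_comm
    _ = ∑ j ∈ T, ∑ a : ι, ∑ b : ι, (x a * A a j) * ((x b * A b j) * c j) := Finset.sum_comm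
    _ = ∑ j ∈ T, (∑ a : ι, x a * A a j) * (∑ b : ι, x b * A b j) * c j := by
        apply Finset.sum_congr rfl
        intro j _
        rw [Finset.sum_mul_sum, Finset.sum_mul]
        apply Finset.sum_congr rfl
        intro a _
        rw [Finset.sum_mul]
        apply Finset.sum_congr rfl
        intro b _
        ring

end PascalAux

/-- Every Pascal tensor (of any order m ≥ 2) is strongly completely
positive: it admits a decomposition into symmetric outer powers of nonnegative
vectors whose span is all of ℝⁿ. -/
theorem pascal_tensor_scp (m n : ℕ) (hm : 2 ≤ m)
    (P : (Fin m → Fin n) → ℝ)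
    (hP : ∀ idx : Fin m → Fin n,
      P idx = ((∑ j, (idx j : ℕ)).factorial : ℝ) / ∏ j, ((idx j : ℕ).factorial : ℝ)) :
    ∃ (r : ℕ) (u : Fin r → Fin n → ℝ),
      (∀ k i, 0 ≤ u k i) ∧ (∀ idx, P idx = ∑ k, ∏ j, u k (idx j)) ∧
      Submodule.span ℝ (Set.range u) = ⊤ := by
  classical
  rcases Nat.eq_zero_or_pos n with hn | hn
  · subst hn
    refine ⟨0, Fin.elim0, ?_, ?_, ?_⟩
    · intro k; exact k.elim0
    · intro idx; exact (idx ⟨0, by omega⟩).elim0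
    · exact Subsingleton.elim _ _
  set d := n - 1 with hd
  set N := m * d with hN
  obtain ⟨k, w, t, hw, ht, hmom⟩ := PascalSCP.moment_rep N
  set u : Fin k → Fin n → ℝ := fun j i =>
    (w j) ^ ((m : ℝ)⁻¹) * ((t j) ^ (i : ℕ) * (1 - t j) ^ (d - (i : ℕ)) / ((i : ℕ).factorial : ℝ))
    with hu_def
  have hupos : ∀ j i, 0 ≤ u j i := by
    intro j i
    have h1 := (ht j).1
    have h2 := (ht j).2
    have h3 : (0:ℝ) ≤ 1 - t j := by linarith
    have h4 : (0:ℝ) ≤ (w j) ^ ((m : ℝ)⁻¹) := Real.rpow_nonneg (hw j) _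
    have h5 : (0:ℝ) < ((i : ℕ).factorial : ℝ) := by positivity
    positivity
  have hile : ∀ i : Fin n, (i : ℕ) ≤ d := by
    intro i
    have := i.isLt
    omega
  have hdec : ∀ idx : Fin m → Fin n, P idx = ∑ j, ∏ l, u j (idx l) := by
    intro idx
    set s := ∑ l, ((idx l : ℕ)) with hs
    have hsle : s ≤ N := by
      rw [hs, hN]
      calc ∑ l, ((idx l : ℕ)) ≤ ∑ _l : Fin m, d := Finset.sum_le_sum fun l _ => hile (idx l)
        _ = m * d := by rw [Finset.sum_const, Finset.card_univ, Fintype.card_fin, smul_eq_mul]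
    have hsub : ∑ l, (d - (idx l : ℕ)) = N - s := by
      have h2 : ∑ l, (d - (idx l : ℕ)) + s = N := by
        rw [hs, ← Finset.sum_add_distrib]
        rw [Finset.sum_congr rfl fun l _ => Nat.sub_add_cancel (hile (idx l))]
        rw [Finset.sum_const, Finset.card_univ, Fintype.card_fin, smul_eq_mul, hN]
      omega
    have hprodj : ∀ j, ∏ l, u j (idx l)
        = w j * ((t j) ^ s * (1 - t j) ^ (N - s)) / ∏ l, (((idx l : ℕ)).factorial : ℝ) := by
      intro j
      have hA : ∏ _l : Fin m, (w j) ^ ((m : ℝ)⁻¹) = w j := by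
        rw [Finset.prod_const, Finset.card_univ, Fintype.card_fin]
        rw [← Real.rpow_natCast ((w j) ^ ((m : ℝ)⁻¹)) m, ← Real.rpow_mul (hw j),
          inv_mul_cancel₀ (by exact_mod_cast (by omega : m ≠ 0)), Real.rpow_one]
      have hterm : ∀ l : Fin m, u j (idx l) = (w j ^ ((m:ℝ))⁻¹) *
          ((t j ^ ((idx l : ℕ)) * (1 - t j) ^ (d - (idx l : ℕ))) / (((idx l : ℕ)).factorial : ℝ)) := by
        intro l
        rw [hu_def]
      rw [Finset.prod_congr rfl fun l _ => hterm l, Finset.prod_mul_distrib,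
        Finset.prod_div_distrib, Finset.prod_mul_distrib, hA, Finset.prod_pow_eq_pow_sum,
        Finset.prod_pow_eq_pow_sum, ← hs, hsub]
      ring
    rw [hP idx, Finset.sum_congr rfl fun j _ => hprodj j, ← Finset.sum_div, ← hs,
      hmom s hsle]
  refine ⟨k, u, hupos, hdec, ?_⟩
  -- span argument via positive definiteness of the Pascal matrix
  by_contra hne
  obtain ⟨φ, hφ0, hφmap⟩ :=
    Submodule.exists_dual_map_eq_bot_of_lt_top (lt_top_iff_ne_top.2 hne) inferInstance
  have hφu : ∀ j, φ (u j) = 0 := by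
    intro j
    have h1 : φ (u j) ∈ Submodule.map φ (Submodule.span ℝ (Set.range u)) :=
      ⟨u j, Submodule.subset_span (Set.mem_range_self j), rfl⟩
    rw [hφmap] at h1
    exact (Submodule.mem_bot ℝ).1 h1
  set x : Fin n → ℝ := fun i => φ (Pi.single i 1) with hx_def
  have hexp : ∀ v : Fin n → ℝ, φ v = ∑ i, v i * x i := by
    intro v
    conv_lhs => rw [← Finset.univ_sum_single v]
    rw [map_sum]
    apply Finset.sum_congr rfl
    intro i _
    have h2 : (Pi.single i (v i) : Fin n → ℝ) = v i • (Pi.single i (1:ℝ) : Fin n → ℝ) := by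
      rw [← Pi.single_smul, smul_eq_mul, mul_one]
    rw [h2, map_smul, smul_eq_mul]
  set l0 : Fin m := ⟨0, by omega⟩ with hl0
  set l1 : Fin m := ⟨1, by omega⟩ with hl1
  have hl01 : l1 ≠ l0 := by
    simp [hl0, hl1, Fin.ext_iff]
  set z0 : Fin n := ⟨0, hn⟩ with hz0
  set Idx : Fin n → Fin n → Fin m → Fin n :=
    fun a b l => if l = l0 then a else if l = l1 then b else z0 with hIdx
  have hIa : ∀ a b, Idx a b l0 = a := by intro a b; simp [hIdx]
  have hIb : ∀ a b, Idx a b l1 = b := by intro a b; simp [hIdx, hl01]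
  have hIz : ∀ a b l, l ≠ l0 → l ≠ l1 → Idx a b l = z0 := by
    intro a b l h1 h2; simp [hIdx, h1, h2]
  set rest : Finset (Fin m) := (Finset.univ.erase l0).erase l1 with hrest
  have hl1mem : l1 ∈ Finset.univ.erase l0 := Finset.mem_erase.2 ⟨hl01, Finset.mem_univ _⟩
  -- decomposition of sums over Fin m
  have hsum_split : ∀ (F : Fin n → ℕ) a b,
      ∑ l, F (Idx a b l) = F a + F b + ∑ _l ∈ rest, F z0 := by
    intro F a b
    rw [← Finset.add_sum_erase _ (fun l => F (Idx a b l)) (Finset.mem_univ l0),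
      ← Finset.add_sum_erase _ (fun l => F (Idx a b l)) hl1mem, hIa, hIb, ← add_assoc, ← hrest]
    congr 1
    apply Finset.sum_congr rfl
    intro l hl
    rw [hrest] at hl
    rw [hIz a b l (Finset.mem_erase.1 (Finset.mem_erase.1 hl).2).1 (Finset.mem_erase.1 hl).1]
  have hprod_split : ∀ (F : Fin n → ℝ) a b,
      ∏ l, F (Idx a b l) = F a * F b * ∏ _l ∈ rest, F z0 := by
    intro F a b
    rw [← Finset.mul_prod_erase _ (fun l => F (Idx a b l)) (Finset.mem_univ l0),
      ← Finset.mul_prod_erase _ (fun l => F (Idx a b l)) hl1mem, hIa, hIb, ← mul_assoc, ← hrest]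
    congr 1
    apply Finset.prod_congr rfl
    intro l hl
    rw [hrest] at hl
    rw [hIz a b l (Finset.mem_erase.1 (Finset.mem_erase.1 hl).2).1 (Finset.mem_erase.1 hl).1]
  -- value of P on the contracted pattern
  have hPab : ∀ a b : Fin n, P (Idx a b) = (((a:ℕ) + (b:ℕ)).choose (b:ℕ) : ℝ) := by
    intro a b
    rw [hP (Idx a b)]
    have h1 : ∑ l, ((Idx a b l : ℕ)) = (a:ℕ) + (b:ℕ) := by
      rw [hsum_split (fun i => (i : ℕ)) a b]
      simp [hz0]
    have h2 : ∏ l, (((Idx a b l : ℕ)).factorial : ℝ) = ((a:ℕ).factorial : ℝ) * ((b:ℕ).factorial : ℝ) := by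
      rw [hprod_split (fun i => (((i:ℕ)).factorial : ℝ)) a b]
      simp [hz0]
    rw [h1, h2]
    have h3 := Nat.add_choose_mul_factorial_mul_factorial (a:ℕ) (b:ℕ)
    have h4 : ((a:ℕ).factorial : ℝ) * ((b:ℕ).factorial : ℝ) ≠ 0 := by positivity
    rw [div_eq_iff h4]
    push_cast [← h3]
    ring
  -- Vandermonde
  have hvan : ∀ a b : Fin n, (((a:ℕ) + (b:ℕ)).choose (b:ℕ) : ℝ)
      = ∑ tt ∈ Finset.range n, ((a:ℕ).choose tt : ℝ) * ((b:ℕ).choose tt : ℝ) := by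
    intro a b
    have h5 : ((a:ℕ) + (b:ℕ)).choose (b:ℕ)
        = ∑ tt ∈ Finset.range n, (a:ℕ).choose tt * (b:ℕ).choose tt := by
      rw [Nat.add_choose_eq, Finset.Nat.sum_antidiagonal_eq_sum_range_succ_mk]
      have h6 : ∀ p ∈ Finset.range ((b:ℕ)+1),
          (a:ℕ).choose p * (b:ℕ).choose ((b:ℕ) - p) = (a:ℕ).choose p * (b:ℕ).choose p := by
        intro p hp
        rw [Nat.choose_symm (by have := Finset.mem_range.1 hp; omega)]
      rw [Finset.sum_congr rfl h6]
      apply Finset.sum_subset (Finset.range_subset_range.2 (by have := b.isLt; omega))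
      intro p _ hp
      have h7 : (b:ℕ) < p := by
        rcases Nat.lt_or_ge (b:ℕ) p with h | h
        · exact h
        · exact absurd (Finset.mem_range.2 (by omega)) hp
      rw [Nat.choose_eq_zero_of_lt h7, mul_zero]
    rw [h5]
    push_cast
    rfl
  -- the double contraction
  set S := ∑ a : Fin n, ∑ b : Fin n, x a * x b * P (Idx a b) with hS
  have hS0 : S = 0 := by
    have h9 : ∀ a b : Fin n, P (Idx a b)
        = ∑ j, (u j a) * (u j b) * (∏ _l ∈ rest, u j z0) := by
      intro a b
      rw [hdec (Idx a b)]
      exact Finset.sum_congr rfl fun j _ => hprod_split (u j) a b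
    rw [hS, Finset.sum_congr rfl fun a _ => Finset.sum_congr rfl fun b _ => by rw [h9 a b]]
    rw [PascalSCP.shuffle Finset.univ x (fun a j => u j a) (fun j => ∏ _l ∈ rest, u j z0)]
    apply Finset.sum_eq_zero
    intro j _
    have h10 : ∑ a : Fin n, x a * u j a = 0 := by
      rw [← hφu j, hexp (u j)]
      exact Finset.sum_congr rfl fun a _ => mul_comm _ _
    rw [h10, zero_mul, zero_mul]
  have hS1 : S = ∑ tt ∈ Finset.range n,
      (∑ a : Fin n, x a * ((a:ℕ).choose tt : ℝ)) ^ 2 := by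
    have h11 : ∀ a b : Fin n, x a * x b * P (Idx a b)
        = x a * x b * (∑ tt ∈ Finset.range n, ((a:ℕ).choose tt : ℝ) * ((b:ℕ).choose tt : ℝ) * 1) := by
      intro a b
      rw [hPab a b, hvan a b]
      simp
    rw [hS, Finset.sum_congr rfl fun a _ => Finset.sum_congr rfl fun b _ => h11 a b]
    rw [PascalSCP.shuffle (Finset.range n) x (fun a tt => ((a:ℕ).choose tt : ℝ)) (fun _ => 1)]
    apply Finset.sum_congr rfl
    intro tt _
    rw [mul_one, sq]
  have hS2 : ∀ tt ∈ Finset.range n, (∑ a : Fin n, x a * ((a:ℕ).choose tt : ℝ)) = 0 := by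
    have h12 := hS1.symm.trans hS0
    have h13 := (Finset.sum_eq_zero_iff_of_nonneg (fun tt _ => sq_nonneg _)).1 h12
    intro tt htt
    exact pow_eq_zero_iff (by omega) |>.1 (h13 tt htt)
  have hxz : ∀ i : Fin n, x i = 0 := by
    have key : ∀ i : Fin n, (∀ i' : Fin n, (i:ℕ) < (i':ℕ) → x i' = 0) → x i = 0 := by
      intro i hgt
      have h14 := hS2 (i:ℕ) (Finset.mem_range.2 i.isLt)
      rw [Finset.sum_eq_single i] at h14
      · rwa [Nat.choose_self, Nat.cast_one, mul_one] at h14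
      · intro a _ hai
        rcases lt_or_gt_of_ne (fun h : (a:ℕ) = (i:ℕ) => hai (Fin.ext h)) with h | h
        · rw [Nat.choose_eq_zero_of_lt h, Nat.cast_zero, mul_zero]
        · rw [hgt a h, zero_mul]
      · intro h; exact absurd (Finset.mem_univ i) h
    have hzero : ∀ K : ℕ, ∀ i : Fin n, n ≤ K + (i:ℕ) + 1 → x i = 0 := by
      intro K
      induction K with
      | zero =>
        intro i hi
        exact key i (fun i' h => absurd i'.isLt (by omega))
      | succ K ih =>
        intro i hi
        exact key i (fun i' h => ih i' (by omega))
    intro i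
    exact hzero n i (by omega)
  apply hφ0
  apply LinearMap.ext
  intro v
  rw [hexp v]
  simp [hxz]
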